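/- Let u ∈ U, τ ∈ (0,1), v ∈ B(0,ρ_max), and let u^ε be the perturbed control equal to v on (τ−ε, τ] and to u elsewhere, with x and x^ε the nominal and perturbed hybrid trajectories under a fixed observation sequence (y₁,…,y_T). Then there exist finite positive constants β′₁(x₀) and, for each i ∈ {2,…,T}, a finite set 𝒧′_i of sequences of non-negative integers with constants β′_i^{(j₁,…,j_{i−1})}(x₀) (independent of ε, u^ε, and the observations), such that for all ε ∈ [0,τ]: |c(x₁^ε(t), u^ε(t)) − c(x₁(t), u(t))| ≤ ε β′₁(x₀) for all t ∈ (τ, 1], and for each i ∈ {2,…,T} and all t ∈ [i−1, i], |c(x_i^ε(t), u^ε(t)) − c(x_i(t), u(t))| ≤ ε Σ_{(j₁,…,j_{i−1}) ∈ 𝒧′_i} β′_i^{(j₁,…,j_{i−1})}(x₀) ∏_{m=1}^{i−1} ‖y_m‖₂^{j_m}. -/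

import Mathlib

open Set MeasureTheory Filter Topology

noncomputable section

open scoped Classical

abbrev EucSp (n : ℕ) := EuclideanSpace ℝ (Fin n)

/-- A function is piecewise continuous on `s` if it is continuous within `s` outside of a
finite set of points. -/
def PiecewiseContinuousOn {E : Type*} [TopologicalSpace E] (u : ℝ → E) (s : Set ℝ) : Prop :=
  ∃ D : Finset ℝ, ∀ t ∈ s, t ∉ D → ContinuousWithinAt u s t

/-- Admissible controls: piecewise continuous functions on `[0, T]` with values in the
closed ball of radius `ρmax`. -/
def AdmissibleCtrl {m : ℕ} (T ρmax : ℝ) (u : ℝ → EucSp m) : Prop :=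
  PiecewiseContinuousOn u (Set.Icc 0 T) ∧ ∀ t ∈ Set.Icc (0 : ℝ) T, ‖u t‖ ≤ ρmax

/-- `x` is a (Carathéodory) solution of `ẋ = f(x, u(t))` on `[a, b]`, in integral form. -/
def IsSolOn {nx m : ℕ} (f : EucSp nx → EucSp m → EucSp nx) (u : ℝ → EucSp m)
    (a b : ℝ) (x : ℝ → EucSp nx) : Prop :=
  ContinuousOn x (Set.Icc a b) ∧
    ∀ t ∈ Set.Icc a b, x t = x a + ∫ s in a..t, f (x s) (u s)

/-- The modes `x i : [i-1, i] → ℝ^{n_x}` of the hybrid system with time-driven switching: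
`x 1 0 = x₀`, each mode solves `ẋ = f(x, u)` on `[i-1, i]`, and modes are linked by the jump
map `g` with observation `y i`. -/
def HybridModes {nx ny m : ℕ} (T : ℕ) (f : EucSp nx → EucSp m → EucSp nx)
    (g : EucSp nx → EucSp ny → EucSp nx) (u : ℝ → EucSp m) (y : ℕ → EucSp ny)
    (x₀ : EucSp nx) (x : ℕ → ℝ → EucSp nx) : Prop :=
  x 1 0 = x₀ ∧
    (∀ i : ℕ, 1 ≤ i → i ≤ T → IsSolOn f u ((i : ℝ) - 1) (i : ℝ) (x i)) ∧
    (∀ i : ℕ, 1 ≤ i → i + 1 ≤ T → x (i + 1) (i : ℝ) = g (x i (i : ℝ)) (y i))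

/-- The hybrid trajectory `X` built from the modes: `X t = x i t` on `[i-1, i)` and
`X T = g (x T T) (y T)`. -/
def IsHybridTraj {nx ny : ℕ} (T : ℕ) (g : EucSp nx → EucSp ny → EucSp nx)
    (y : ℕ → EucSp ny) (x : ℕ → ℝ → EucSp nx) (X : ℝ → EucSp nx) : Prop :=
  (∀ i : ℕ, 1 ≤ i → i ≤ T → ∀ t ∈ Set.Ico ((i : ℝ) - 1) (i : ℝ), X t = x i t) ∧
    X (T : ℝ) = g (x T (T : ℝ)) (y T)

/-- The perturbed control: equal to `v` on `(τ - ε, τ]` and to `u` elsewhere. -/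
def perturb {m : ℕ} (u : ℝ → EucSp m) (τ : ℝ) (v : EucSp m) (ε : ℝ) : ℝ → EucSp m :=
  fun t => if τ - ε < t ∧ t ≤ τ then v else u t

section Helpers

lemma aesm_pw {E : Type*} [NormedAddCommGroup E] {u : ℝ → E} {s : Set ℝ}
    (hs : MeasurableSet s) (D : Finset ℝ)
    (h : ∀ t ∈ s, t ∉ D → ContinuousWithinAt u s t) :
    AEStronglyMeasurable u (volume.restrict s) := by
  have h1 : ContinuousOn u (s \ (D : Set ℝ)) := fun t ht =>
    ((h t ht.1 ht.2).mono Set.diff_subset)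
  have h2 : AEStronglyMeasurable u (volume.restrict (s \ (D : Set ℝ))) :=
    h1.aestronglyMeasurable (hs.diff (D.finite_toSet.measurableSet))
  have hD : volume ((D : Set ℝ) ∩ s) = 0 :=
    measure_mono_null Set.inter_subset_left ((D.finite_toSet.countable).measure_zero _)
  have he : (s \ (D : Set ℝ)) =ᵐ[volume] s := diff_ae_eq_self.2 (by rwa [Set.inter_comm] at hD)
  exact h2.mono_measure (Measure.restrict_congr_set he).ge


/-- integral Gronwall inequality -/
lemma gronwall_int {φ : ℝ → ℝ} {a b A K : ℝ} (hab : a ≤ b)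
    (hφ : ContinuousOn φ (Icc a b)) (hφ0 : ∀ t ∈ Icc a b, 0 ≤ φ t)
    (hA : 0 ≤ A) (hK : 0 ≤ K)
    (h : ∀ t ∈ Icc a b, φ t ≤ A + K * ∫ s in a..t, φ s) :
    ∀ t ∈ Icc a b, φ t ≤ A * Real.exp (K * (t - a)) := by
  set clamp : ℝ → ℝ := fun s => max a (min b s) with hclamp
  have hclcont : Continuous clamp := (continuous_const.max (continuous_const.min continuous_id))
  have hclmem : ∀ s, clamp s ∈ Icc a b := fun s =>
    ⟨le_max_left _ _, max_le (hab) (min_le_left _ _)⟩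
  have hcleq : ∀ s ∈ Icc a b, clamp s = s := by
    intro s hs
    simp [hclamp, min_eq_right hs.2, max_eq_right hs.1]
  set ψ : ℝ → ℝ := fun s => φ (clamp s) with hψ
  have hψc : Continuous ψ := hφ.comp_continuous hclcont hclmem
  have hψ0 : ∀ s, 0 ≤ ψ s := fun s => hφ0 _ (hclmem s)
  have hψeq : ∀ s ∈ Icc a b, ψ s = φ s := fun s hs => by rw [hψ]; simp [hcleq s hs]
  set G : ℝ → ℝ := fun t => A + K * ∫ s in a..t, ψ s with hG
  have hder : ∀ t, HasDerivAt G (K * ψ t) t := by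
    intro t
    exact ((hψc.integral_hasStrictDerivAt a t).hasDerivAt.const_mul K).const_add A
  have hGpos : ∀ t ∈ Icc a b, 0 ≤ G t := by
    intro t ht
    have : 0 ≤ ∫ s in a..t, ψ s :=
      intervalIntegral.integral_nonneg ht.1 (fun s _ => hψ0 s)
    have := mul_nonneg hK this
    simp only [hG]; linarith
  have hint : ∀ t ∈ Icc a b, ∫ s in a..t, ψ s = ∫ s in a..t, φ s := by
    intro t ht
    refine intervalIntegral.integral_congr ?_
    intro s hs
    rw [Set.uIcc_of_le ht.1] at hs
    exact hψeq s ⟨hs.1, hs.2.trans ht.2⟩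
  have hφG : ∀ t ∈ Icc a b, φ t ≤ G t := by
    intro t ht
    rw [hG]; simp only
    rw [hint t ht]; exact h t ht
  have key : ∀ t ∈ Icc a b, ‖G t‖ ≤ gronwallBound A K 0 (t - a) := by
    refine norm_le_gronwallBound_of_norm_deriv_right_le (f' := fun t => K * ψ t)
      (Continuous.continuousOn (continuous_iff_continuousAt.2
        fun t => (hder t).continuousAt)) ?_ ?_ ?_
    · intro x _; exact (hder x).hasDerivWithinAt
    · simp [hG, Real.norm_eq_abs, abs_of_nonneg hA]
    · intro x hx
      have h1 : ψ x ≤ G x := by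
        have := hφG x ⟨hx.1, le_of_lt hx.2⟩
        rwa [hψeq x ⟨hx.1, le_of_lt hx.2⟩]
      have h2 : ‖G x‖ = G x := Real.norm_of_nonneg (hGpos x ⟨hx.1, le_of_lt hx.2⟩)
      rw [Real.norm_eq_abs, abs_of_nonneg (mul_nonneg hK (hψ0 x)), h2]
      nlinarith [hψ0 x]
  intro t ht
  calc φ t ≤ G t := hφG t ht
    _ = ‖G t‖ := (Real.norm_of_nonneg (hGpos t ht)).symm
    _ ≤ gronwallBound A K 0 (t - a) := key t ht
    _ = A * Real.exp (K * (t - a)) := gronwallBound_ε0 _ _ _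


variable {nx m : ℕ}

lemma integrable_f_comp {f : EucSp nx → EucSp m → EucSp nx}
    (hf : Continuous fun p : EucSp nx × EucSp m => f p.1 p.2)
    {x : ℝ → EucSp nx} {u : ℝ → EucSp m} {a b : ℝ} (hab : a ≤ b)
    (hx : ContinuousOn x (Icc a b))
    (hu : AEStronglyMeasurable u (volume.restrict (Icc a b)))
    {M : ℝ} (hM : ∀ s ∈ Icc a b, ‖f (x s) (u s)‖ ≤ M) :
    IntervalIntegrable (fun s => f (x s) (u s)) volume a b := by
  have hpair : AEStronglyMeasurable (fun s => (x s, u s))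
      (volume.restrict (Icc a b)) :=
    ((hx.aestronglyMeasurable measurableSet_Icc).prodMk hu)
  have hmeas : AEStronglyMeasurable (fun s => f (x s) (u s))
      (volume.restrict (Icc a b)) := hf.comp_aestronglyMeasurable hpair
  rw [intervalIntegrable_iff_integrableOn_Icc_of_le hab]
  refine Integrable.mono' (integrable_const M) hmeas ?_
  rw [ae_restrict_iff' measurableSet_Icc]
  exact ae_of_all _ hM

lemma sol_norm_bound {f : EucSp nx → EucSp m → EucSp nx} {K₁ ρmax : ℝ}
    (hρ : 0 ≤ ρmax) (hK₁ : 1 ≤ K₁)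
    (hf : Continuous fun p : EucSp nx × EucSp m => f p.1 p.2)
    (hLip : ∀ (x' x'' : EucSp nx) (u' u'' : EucSp m), ‖u'‖ ≤ ρmax → ‖u''‖ ≤ ρmax →
      ‖f x' u' - f x'' u''‖ ≤ K₁ * (‖x' - x''‖ + ‖u' - u''‖))
    {u : ℝ → EucSp m} {a b : ℝ} (hab : a ≤ b) {x : ℝ → EucSp nx}
    (hsol : ContinuousOn x (Icc a b) ∧
      ∀ t ∈ Icc a b, x t = x a + ∫ s in a..t, f (x s) (u s))
    (humeas : AEStronglyMeasurable u (volume.restrict (Icc a b)))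
    (hubdd : ∀ s ∈ Icc a b, ‖u s‖ ≤ ρmax) :
    ∀ t ∈ Icc a b, ‖x t‖ ≤
      (‖x a‖ + (‖f 0 0‖ + K₁ * ρmax) * (b - a)) * Real.exp (K₁ * (b - a)) := by
  obtain ⟨hxc, hxe⟩ := hsol
  set F₀ : ℝ := ‖f 0 0‖ + K₁ * ρmax with hF₀
  have hF₀0 : 0 ≤ F₀ := by positivity
  have hK₁0 : (0:ℝ) ≤ K₁ := by linarith
  have hfb : ∀ s ∈ Icc a b, ‖f (x s) (u s)‖ ≤ F₀ + K₁ * ‖x s‖ := by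
    intro s hs
    have h1 : ‖f (x s) (u s) - f 0 0‖ ≤ K₁ * (‖x s - 0‖ + ‖u s - 0‖) :=
      hLip _ _ _ _ (hubdd s hs) (by simpa using hρ)
    have h2 := norm_sub_norm_le (f (x s) (u s)) (f 0 0)
    simp only [sub_zero] at h1
    have h3 : ‖u s‖ ≤ ρmax := hubdd s hs
    nlinarith [norm_nonneg (x s), norm_nonneg (u s)]
  -- global bound on ‖x‖ over the compact interval
  obtain ⟨M, hMb⟩ := (isCompact_Icc (a := a) (b := b)).exists_bound_of_continuousOn hxc
  have hII : IntervalIntegrable (fun s => f (x s) (u s)) volume a b := by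
    refine integrable_f_comp hf hab hxc humeas (M := F₀ + K₁ * M) ?_
    intro s hs
    have := hfb s hs
    have := hMb s hs
    nlinarith
  set A : ℝ := ‖x a‖ + F₀ * (b - a) with hA
  have hba : (0:ℝ) ≤ b - a := by linarith
  have hA0 : 0 ≤ A := by have := norm_nonneg (x a); nlinarith
  have key : ∀ t ∈ Icc a b, ‖x t‖ ≤ A + K₁ * ∫ s in a..t, ‖x s‖ := by
    intro t ht
    have hat : a ≤ t := ht.1
    have hsub : Icc a t ⊆ Icc a b := Icc_subset_Icc le_rfl ht.2
    have hIIt : IntervalIntegrable (fun s => f (x s) (u s)) volume a t :=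
      hII.mono_set (by rw [uIcc_of_le hat, uIcc_of_le hab]; exact hsub)
    have h1 : ‖x t‖ ≤ ‖x a‖ + ‖∫ s in a..t, f (x s) (u s)‖ := by
      rw [hxe t ht]; exact norm_add_le _ _
    have h2 : ‖∫ s in a..t, f (x s) (u s)‖ ≤ ∫ s in a..t, ‖f (x s) (u s)‖ :=
      intervalIntegral.norm_integral_le_integral_norm hat
    have h3 : ∫ s in a..t, ‖f (x s) (u s)‖ ≤ ∫ s in a..t, (F₀ + K₁ * ‖x s‖) := by
      refine intervalIntegral.integral_mono_on hat hIIt.norm ?_ ?_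
      · refine ContinuousOn.intervalIntegrable ?_
        rw [uIcc_of_le hat]
        exact continuousOn_const.add (continuousOn_const.mul
          ((hxc.mono hsub).norm))
      · intro s hs; exact hfb s (hsub hs)
    have h4 : ∫ s in a..t, (F₀ + K₁ * ‖x s‖)
        = F₀ * (t - a) + K₁ * ∫ s in a..t, ‖x s‖ := by
      rw [intervalIntegral.integral_add intervalIntegrable_const
        (ContinuousOn.intervalIntegrable (by
          rw [uIcc_of_le hat]; exact continuousOn_const.mul ((hxc.mono hsub).norm)))]
      rw [intervalIntegral.integral_const, intervalIntegral.integral_const_mul]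
      ring_nf
    have h5 : F₀ * (t - a) ≤ F₀ * (b - a) := by
      have := ht.2; nlinarith
    calc ‖x t‖ ≤ ‖x a‖ + ∫ s in a..t, ‖f (x s) (u s)‖ := le_trans h1 (by linarith)
      _ ≤ ‖x a‖ + (F₀ * (t - a) + K₁ * ∫ s in a..t, ‖x s‖) := by rw [← h4]; linarith
      _ ≤ A + K₁ * ∫ s in a..t, ‖x s‖ := by rw [hA]; linarith
  intro t ht
  have := gronwall_int hab hxc.norm (fun s _ => norm_nonneg _) hA0 hK₁0 key t ht
  have hexp : Real.exp (K₁ * (t - a)) ≤ Real.exp (K₁ * (b - a)) := by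
    apply Real.exp_le_exp.2; nlinarith [ht.2]
  nlinarith [Real.exp_pos (K₁ * (t - a))]

lemma sol_diff_bound {f : EucSp nx → EucSp m → EucSp nx} {K₁ ρmax : ℝ}
    (hρ : 0 ≤ ρmax) (hK₁ : 1 ≤ K₁)
    (hf : Continuous fun p : EucSp nx × EucSp m => f p.1 p.2)
    (hLip : ∀ (x' x'' : EucSp nx) (u' u'' : EucSp m), ‖u'‖ ≤ ρmax → ‖u''‖ ≤ ρmax →
      ‖f x' u' - f x'' u''‖ ≤ K₁ * (‖x' - x''‖ + ‖u' - u''‖))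
    {u u' : ℝ → EucSp m} {a b : ℝ} (hab : a ≤ b) {x X : ℝ → EucSp nx}
    (hsol : ContinuousOn x (Icc a b) ∧
      ∀ t ∈ Icc a b, x t = x a + ∫ s in a..t, f (x s) (u s))
    (hsol' : ContinuousOn X (Icc a b) ∧
      ∀ t ∈ Icc a b, X t = X a + ∫ s in a..t, f (X s) (u' s))
    (humeas : AEStronglyMeasurable u (volume.restrict (Icc a b)))
    (humeas' : AEStronglyMeasurable u' (volume.restrict (Icc a b)))
    (hubdd : ∀ s ∈ Icc a b, ‖u s‖ ≤ ρmax)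
    (hubdd' : ∀ s ∈ Icc a b, ‖u' s‖ ≤ ρmax)
    (hud : IntervalIntegrable (fun s => ‖u' s - u s‖) volume a b)
    {η : ℝ} (hη0 : 0 ≤ η)
    (hη : ∀ t ∈ Icc a b, ∫ s in a..t, ‖u' s - u s‖ ≤ η) :
    ∀ t ∈ Icc a b, ‖X t - x t‖ ≤
      (‖X a - x a‖ + K₁ * η) * Real.exp (K₁ * (b - a)) := by
  obtain ⟨hxc, hxe⟩ := hsol
  obtain ⟨hXc, hXe⟩ := hsol'
  have hK₁0 : (0:ℝ) ≤ K₁ := by linarith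
  have hba : (0:ℝ) ≤ b - a := by linarith
  obtain ⟨M, hMb⟩ := (isCompact_Icc (a := a) (b := b)).exists_bound_of_continuousOn hxc
  obtain ⟨M', hMb'⟩ := (isCompact_Icc (a := a) (b := b)).exists_bound_of_continuousOn hXc
  have hfb : ∀ (z : EucSp nx) (w : EucSp m), ‖w‖ ≤ ρmax →
      ‖f z w‖ ≤ ‖f 0 0‖ + K₁ * (‖z‖ + ρmax) := by
    intro z w hw
    have h1 : ‖f z w - f 0 0‖ ≤ K₁ * (‖z - 0‖ + ‖w - 0‖) :=
      hLip _ _ _ _ hw (by simpa using hρ)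
    have h2 := norm_sub_norm_le (f z w) (f 0 0)
    simp only [sub_zero] at h1
    nlinarith [norm_nonneg z, norm_nonneg w]
  have hII : IntervalIntegrable (fun s => f (x s) (u s)) volume a b := by
    refine integrable_f_comp hf hab hxc humeas
      (M := ‖f 0 0‖ + K₁ * (M + ρmax)) ?_
    intro s hs
    have := hfb (x s) (u s) (hubdd s hs); have := hMb s hs; nlinarith
  have hII' : IntervalIntegrable (fun s => f (X s) (u' s)) volume a b := by
    refine integrable_f_comp hf hab hXc humeas'
      (M := ‖f 0 0‖ + K₁ * (M' + ρmax)) ?_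
    intro s hs
    have := hfb (X s) (u' s) (hubdd' s hs); have := hMb' s hs; nlinarith
  set A : ℝ := ‖X a - x a‖ + K₁ * η with hA
  have hA0 : 0 ≤ A := by have := norm_nonneg (X a - x a); nlinarith
  have hφc : ContinuousOn (fun s => ‖X s - x s‖) (Icc a b) := (hXc.sub hxc).norm
  have key : ∀ t ∈ Icc a b, ‖X t - x t‖ ≤ A + K₁ * ∫ s in a..t, ‖X s - x s‖ := by
    intro t ht
    have hat : a ≤ t := ht.1
    have hsub : Icc a t ⊆ Icc a b := Icc_subset_Icc le_rfl ht.2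
    have hmono : uIcc a t ⊆ uIcc a b := by
      rw [uIcc_of_le hat, uIcc_of_le hab]; exact hsub
    have hIIt := hII.mono_set hmono
    have hIIt' := hII'.mono_set hmono
    have hudt := hud.mono_set hmono
    have heq : X t - x t = (X a - x a) +
        ∫ s in a..t, (f (X s) (u' s) - f (x s) (u s)) := by
      rw [hXe t ht, hxe t ht, intervalIntegral.integral_sub hIIt' hIIt]
      abel
    have h1 : ‖X t - x t‖ ≤ ‖X a - x a‖ +
        ‖∫ s in a..t, (f (X s) (u' s) - f (x s) (u s))‖ := by
      rw [heq]; exact norm_add_le _ _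
    have h2 : ‖∫ s in a..t, (f (X s) (u' s) - f (x s) (u s))‖ ≤
        ∫ s in a..t, ‖f (X s) (u' s) - f (x s) (u s)‖ :=
      intervalIntegral.norm_integral_le_integral_norm hat
    have hRint : IntervalIntegrable
        (fun s => K₁ * ‖X s - x s‖ + K₁ * ‖u' s - u s‖) volume a t := by
      refine IntervalIntegrable.add ?_ (hudt.const_mul K₁)
      refine ContinuousOn.intervalIntegrable ?_
      rw [uIcc_of_le hat]
      exact continuousOn_const.mul ((hφc.mono hsub))
    have h3 : ∫ s in a..t, ‖f (X s) (u' s) - f (x s) (u s)‖ ≤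
        ∫ s in a..t, (K₁ * ‖X s - x s‖ + K₁ * ‖u' s - u s‖) := by
      refine intervalIntegral.integral_mono_on hat (hIIt'.sub hIIt).norm hRint ?_
      intro s hs
      have := hLip (X s) (x s) (u' s) (u s) (hubdd' s (hsub hs)) (hubdd s (hsub hs))
      nlinarith
    have h4 : ∫ s in a..t, (K₁ * ‖X s - x s‖ + K₁ * ‖u' s - u s‖)
        = K₁ * (∫ s in a..t, ‖X s - x s‖) + K₁ * ∫ s in a..t, ‖u' s - u s‖ := by
      rw [intervalIntegral.integral_add (by
          refine ContinuousOn.intervalIntegrable ?_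
          rw [uIcc_of_le hat]
          exact continuousOn_const.mul ((hφc.mono hsub))) (hudt.const_mul K₁),
        intervalIntegral.integral_const_mul, intervalIntegral.integral_const_mul]
    have h5 : K₁ * ∫ s in a..t, ‖u' s - u s‖ ≤ K₁ * η :=
      mul_le_mul_of_nonneg_left (hη t ht) hK₁0
    calc ‖X t - x t‖ ≤ ‖X a - x a‖ +
          ∫ s in a..t, ‖f (X s) (u' s) - f (x s) (u s)‖ := by linarith
      _ ≤ ‖X a - x a‖ + (K₁ * (∫ s in a..t, ‖X s - x s‖)
            + K₁ * ∫ s in a..t, ‖u' s - u s‖) := by rw [← h4]; linarith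
      _ ≤ A + K₁ * ∫ s in a..t, ‖X s - x s‖ := by rw [hA]; linarith
  intro t ht
  have := gronwall_int hab hφc (fun s _ => norm_nonneg _) hA0 hK₁0 key t ht
  have hexp : Real.exp (K₁ * (t - a)) ≤ Real.exp (K₁ * (b - a)) := by
    apply Real.exp_le_exp.2; nlinarith [ht.2]
  nlinarith [Real.exp_pos (K₁ * (t - a))]


end Helpers

section Helpers2
variable {m : ℕ}

lemma perturb_eq_piecewise (u : ℝ → EucSp m) (τ : ℝ) (v : EucSp m) (ε : ℝ) :
    perturb u τ v ε = (Ioc (τ - ε) τ).piecewise (fun _ => v) u := by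
  funext t
  by_cases h : τ - ε < t ∧ t ≤ τ
  · rw [perturb, if_pos h]; simp [Set.piecewise, Set.mem_Ioc, h]
  · rw [perturb, if_neg h]; simp [Set.piecewise, Set.mem_Ioc, h]

lemma perturb_aesm {u : ℝ → EucSp m} {s : Set ℝ}
    (hu : AEStronglyMeasurable u (volume.restrict s)) (τ : ℝ) (v : EucSp m) (ε : ℝ) :
    AEStronglyMeasurable (perturb u τ v ε) (volume.restrict s) := by
  rw [perturb_eq_piecewise]
  exact AEStronglyMeasurable.piecewise measurableSet_Ioc
    aestronglyMeasurable_const (hu.mono_measure Measure.restrict_le_self)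

lemma perturb_norm_le {u : ℝ → EucSp m} {ρmax : ℝ} {τ : ℝ} {v : EucSp m} {ε : ℝ}
    {t : ℝ} (hut : ‖u t‖ ≤ ρmax) (hv : ‖v‖ ≤ ρmax) : ‖perturb u τ v ε t‖ ≤ ρmax := by
  rw [perturb]
  split <;> assumption

lemma perturb_sub_integrable {u : ℝ → EucSp m} {ρmax : ℝ} (τ : ℝ) (v : EucSp m) (ε : ℝ)
    {a b : ℝ} (hab : a ≤ b)
    (hu : AEStronglyMeasurable u (volume.restrict (Icc a b)))
    (hubdd : ∀ s ∈ Icc a b, ‖u s‖ ≤ ρmax) (hv : ‖v‖ ≤ ρmax) :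
    IntervalIntegrable (fun s => ‖perturb u τ v ε s - u s‖) volume a b := by
  have hm : AEStronglyMeasurable (fun s => ‖perturb u τ v ε s - u s‖)
      (volume.restrict (Icc a b)) := ((perturb_aesm hu τ v ε).sub hu).norm
  rw [intervalIntegrable_iff_integrableOn_Icc_of_le hab]
  refine Integrable.mono' (integrable_const (2 * ρmax)) hm ?_
  rw [ae_restrict_iff' measurableSet_Icc]
  refine ae_of_all _ fun s hs => ?_
  have h1 : ‖perturb u τ v ε s - u s‖ ≤ ‖perturb u τ v ε s‖ + ‖u s‖ := norm_sub_le _ _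
  have h2 := perturb_norm_le (hubdd s hs) hv (τ := τ) (ε := ε)
  have h3 := hubdd s hs
  rw [Real.norm_eq_abs, abs_of_nonneg (norm_nonneg _)]
  linarith

lemma perturb_integral_le {u : ℝ → EucSp m} {ρmax : ℝ} (hρ : 0 ≤ ρmax)
    (τ : ℝ) (v : EucSp m) {ε : ℝ} (hε : 0 ≤ ε)
    {a b : ℝ} (hab : a ≤ b)
    (hu : AEStronglyMeasurable u (volume.restrict (Icc a b)))
    (hubdd : ∀ s ∈ Icc a b, ‖u s‖ ≤ ρmax) (hv : ‖v‖ ≤ ρmax) :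
    ∀ t ∈ Icc a b, ∫ s in a..t, ‖perturb u τ v ε s - u s‖ ≤ 2 * ρmax * ε := by
  intro t ht
  have hat : a ≤ t := ht.1
  have hsub : Icc a t ⊆ Icc a b := Icc_subset_Icc le_rfl ht.2
  set J : Set ℝ := Ioc (τ - ε) τ with hJ
  have hJm : MeasurableSet J := measurableSet_Ioc
  have hIind : IntervalIntegrable (J.indicator fun _ => (2 : ℝ) * ρmax) volume a t := by
    refine Integrable.intervalIntegrable ?_
    rw [integrable_indicator_iff hJm]
    exact integrableOn_const (by rw [hJ, Real.volume_Ioc]; exact ENNReal.ofReal_ne_top)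
  have hIl : IntervalIntegrable (fun s => ‖perturb u τ v ε s - u s‖) volume a t :=
    (perturb_sub_integrable τ v ε hab hu hubdd hv).mono_set
      (by rw [uIcc_of_le hat, uIcc_of_le hab]; exact hsub)
  have hmono : ∫ s in a..t, ‖perturb u τ v ε s - u s‖ ≤
      ∫ s in a..t, (J.indicator fun _ => (2:ℝ) * ρmax) s := by
    refine intervalIntegral.integral_mono_on hat hIl hIind ?_
    intro s hs
    by_cases hsJ : s ∈ J
    · rw [Set.indicator_of_mem hsJ]
      have h1 : perturb u τ v ε s = v := by
        rw [perturb, if_pos]; exact ⟨hsJ.1, hsJ.2⟩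
      rw [h1]
      have := norm_sub_le v (u s)
      have := hubdd s (hsub hs)
      linarith
    · rw [Set.indicator_of_notMem hsJ]
      have h1 : perturb u τ v ε s = u s := by
        rw [perturb, if_neg]; exact fun hc => hsJ ⟨hc.1, hc.2⟩
      rw [h1]; simp
  have hcalc : ∫ s in a..t, (J.indicator fun _ => (2:ℝ) * ρmax) s ≤ 2 * ρmax * ε := by
    rw [intervalIntegral.integral_of_le hat, MeasureTheory.integral_indicator hJm,
      MeasureTheory.setIntegral_const]
    have hmeas : (volume.restrict (Ioc a t)) J ≤ ENNReal.ofReal ε := by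
      rw [Measure.restrict_apply hJm]
      refine le_trans (measure_mono Set.inter_subset_left) ?_
      rw [hJ, Real.volume_Ioc]
      exact ENNReal.ofReal_le_ofReal (by linarith)
    have htoReal : ((volume.restrict (Ioc a t)) J).toReal ≤ ε := by
      refine le_trans (ENNReal.toReal_mono (by simp) hmeas) ?_
      rw [ENNReal.toReal_ofReal hε]
    rw [smul_eq_mul, measureReal_def]
    nlinarith [ENNReal.toReal_nonneg (a := (volume.restrict (Ioc a t)) J)]
  linarith


lemma mean_value_ball {E F : Type*} [NormedAddCommGroup E] [NormedSpace ℝ E]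
    [NormedAddCommGroup F] [NormedSpace ℝ F]
    {φ : E → F} {R C : ℝ} (hφ : Differentiable ℝ φ)
    (hC : ∀ z : E, ‖z‖ ≤ R → ‖fderiv ℝ φ z‖ ≤ C)
    {z₁ z₂ : E} (h₁ : ‖z₁‖ ≤ R) (h₂ : ‖z₂‖ ≤ R) :
    ‖φ z₁ - φ z₂‖ ≤ C * ‖z₁ - z₂‖ := by
  refine (convex_closedBall (0 : E) R).norm_image_sub_le_of_norm_fderiv_le
    (fun z _ => hφ z) ?_ ?_ ?_
  · intro z hz
    exact hC z (by simpa [Metric.mem_closedBall, dist_zero_right] using hz)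
  · simpa [Metric.mem_closedBall, dist_zero_right] using h₂
  · simpa [Metric.mem_closedBall, dist_zero_right] using h₁

lemma poly_list (s : Finset ℕ) {C : ℝ} (hC : 0 < C) (N : ℕ) :
    ∃ B : List ((ℕ → ℕ) × ℝ), (∀ p ∈ B, 0 < p.2) ∧
      ∀ w : ℕ → ℝ, (∀ j ∈ s, 0 ≤ w j) →
        C * ∏ mm ∈ s, (1 + w mm) ^ N ≤
          (B.map fun p => p.2 * ∏ mm ∈ s, (w mm) ^ (p.1 mm)).sum := by
  classical
  refine ⟨s.powerset.toList.map fun S => (fun mm => if mm ∈ S then N else 0,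
    C * 2 ^ (N * s.card)), ?_, ?_⟩
  · intro p hp
    simp only [List.mem_map] at hp
    obtain ⟨S, _, rfl⟩ := hp
    positivity
  · intro w hw
    have step1 : ∀ j ∈ s, (1 + w j) ^ N ≤ 2 ^ N * (1 + (w j) ^ N) := by
      intro j hj
      have hwj := hw j hj
      rcases le_total (w j) 1 with h | h
      · have h1 : (1 + w j) ^ N ≤ 2 ^ N :=
          pow_le_pow_left₀ (by linarith) (by linarith) N
        have h2 : (1:ℝ) ≤ 1 + (w j) ^ N := le_add_of_nonneg_right (pow_nonneg hwj N)
        nlinarith [pow_pos (show (0:ℝ) < 2 by norm_num) N]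
      · have h1 : (1 + w j) ^ N ≤ (2 * w j) ^ N :=
          pow_le_pow_left₀ (by linarith) (by linarith) N
        have h2 : (2 * w j) ^ N = 2 ^ N * (w j) ^ N := mul_pow 2 (w j) N
        have h3 : (w j) ^ N ≤ 1 + (w j) ^ N := by linarith
        nlinarith [pow_pos (show (0:ℝ) < 2 by norm_num) N, pow_nonneg hwj N]
    have lhs1 : ∏ mm ∈ s, (1 + w mm) ^ N ≤ ∏ mm ∈ s, (2 ^ N * (1 + (w mm) ^ N)) := by
      refine Finset.prod_le_prod (fun j hj => pow_nonneg (by have := hw j hj; linarith) N) step1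
    have lhs2 : ∏ mm ∈ s, ((2:ℝ) ^ N * (1 + (w mm) ^ N))
        = 2 ^ (N * s.card) * ∏ mm ∈ s, (1 + (w mm) ^ N) := by
      rw [Finset.prod_mul_distrib, Finset.prod_const, ← pow_mul]
    have expand : ∏ mm ∈ s, ((w mm) ^ N + 1)
        = ∑ S ∈ s.powerset, ∏ mm ∈ S, (w mm) ^ N := by
      rw [Finset.prod_add]
      refine Finset.sum_congr rfl fun S _ => by simp
    have rhs : ((s.powerset.toList.map fun S => ((fun mm => if mm ∈ S then N else 0 : ℕ → ℕ),
          C * 2 ^ (N * s.card))).map fun p =>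
            p.2 * ∏ mm ∈ s, (w mm) ^ (p.1 mm)).sum
        = ∑ S ∈ s.powerset, C * 2 ^ (N * s.card) * ∏ mm ∈ S, (w mm) ^ N := by
      rw [List.map_map, Finset.sum_map_toList]
      refine Finset.sum_congr rfl fun S hS => ?_
      simp only [Function.comp]
      congr 1
      rw [Finset.mem_powerset] at hS
      rw [← Finset.prod_subset hS (fun x _ hx => by simp [if_neg hx])]
      refine Finset.prod_congr rfl fun mm hmm => by simp [if_pos hmm]
    rw [rhs, ← Finset.mul_sum]
    have : C * ∏ mm ∈ s, (1 + w mm) ^ N ≤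
        C * (2 ^ (N * s.card) * ∑ S ∈ s.powerset, ∏ mm ∈ S, (w mm) ^ N) := by
      have h4 : ∏ mm ∈ s, (1 + w mm) ^ N ≤
          2 ^ (N * s.card) * ∑ S ∈ s.powerset, ∏ mm ∈ S, (w mm) ^ N := by
        calc ∏ mm ∈ s, (1 + w mm) ^ N
            ≤ ∏ mm ∈ s, (2 ^ N * (1 + (w mm) ^ N)) := lhs1
          _ = 2 ^ (N * s.card) * ∏ mm ∈ s, (1 + (w mm) ^ N) := lhs2
          _ = 2 ^ (N * s.card) * ∏ mm ∈ s, ((w mm) ^ N + 1) := by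
              congr 1
              exact Finset.prod_congr rfl fun j _ => add_comm _ _
          _ = 2 ^ (N * s.card) * ∑ S ∈ s.powerset, ∏ mm ∈ S, (w mm) ^ N := by
              rw [expand]
      exact mul_le_mul_of_nonneg_left h4 (le_of_lt hC)
    calc C * ∏ mm ∈ s, (1 + w mm) ^ N
        ≤ C * (2 ^ (N * s.card) * ∑ S ∈ s.powerset, ∏ mm ∈ S, (w mm) ^ N) := this
      _ = C * 2 ^ (N * s.card) * ∑ S ∈ s.powerset, ∏ mm ∈ S, (w mm) ^ N := by ring


lemma one_le_finset_prod_aux {s : Finset ℕ} {f : ℕ → ℝ} (h : ∀ j ∈ s, 1 ≤ f j) :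
    1 ≤ ∏ j ∈ s, f j := by
  have := Finset.prod_le_prod (f := fun _ => (1:ℝ)) (g := f) (fun i _ => zero_le_one) h
  simpa using this

set_option maxHeartbeats 2000000 in
lemma mode_bounds {nx ny m : ℕ} (T : ℕ) (hT : 1 ≤ T)
    (ρmax : ℝ) (hρ : 0 ≤ ρmax) (K₁ : ℝ) (hK₁ : 1 ≤ K₁)
    (K₂ K₃ K₄ K₅ : ℝ) (hK₂ : 0 ≤ K₂) (hK₃ : 0 ≤ K₃) (hK₄ : 0 ≤ K₄) (hK₅ : 0 ≤ K₅)
    (L₁ L₂ : ℕ)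
    (f : EucSp nx → EucSp m → EucSp nx)
    (hf : Continuous fun p : EucSp nx × EucSp m => f p.1 p.2)
    (hLip : ∀ (x' x'' : EucSp nx) (u' u'' : EucSp m), ‖u'‖ ≤ ρmax → ‖u''‖ ≤ ρmax →
      ‖f x' u' - f x'' u''‖ ≤ K₁ * (‖x' - x''‖ + ‖u' - u''‖))
    (g : EucSp nx → EucSp ny → EucSp nx)
    (hgd : ∀ yy : EucSp ny, Differentiable ℝ fun z => g z yy)
    (hgb : ∀ (z : EucSp nx) (yy : EucSp ny),
      ‖g z yy‖ ≤ K₂ + K₃ * ‖z‖ ^ L₁ + K₄ * ‖yy‖ ^ L₂ + K₅ * ‖z‖ ^ L₁ * ‖yy‖ ^ L₂ ∧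
      ‖fderiv ℝ (fun w => g w yy) z‖ ≤
        K₂ + K₃ * ‖z‖ ^ L₁ + K₄ * ‖yy‖ ^ L₂ + K₅ * ‖z‖ ^ L₁ * ‖yy‖ ^ L₂)
    (u : ℝ → EucSp m) (hu : AdmissibleCtrl (T : ℝ) ρmax u)
    (τ : ℝ) (hτ : τ ∈ Set.Ioo (0 : ℝ) 1) (v : EucSp m) (hv : ‖v‖ ≤ ρmax)
    (x₀ : EucSp nx) (i : ℕ) (hi1 : 1 ≤ i) (hiT : i ≤ T) :
    ∃ C D : ℝ, ∃ N : ℕ, 1 ≤ C ∧ 0 < D ∧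
      ∀ (y : ℕ → EucSp ny) (x : ℕ → ℝ → EucSp nx) (X : ℝ → ℕ → ℝ → EucSp nx),
        HybridModes T f g u y x₀ x →
        (∀ ε ∈ Set.Icc (0 : ℝ) τ, HybridModes T f g (perturb u τ v ε) y x₀ (X ε)) →
        ∀ ε ∈ Set.Icc (0 : ℝ) τ, ∀ t ∈ Set.Icc ((i : ℝ) - 1) (i : ℝ),
          ‖x i t‖ ≤ C * ∏ mm ∈ Finset.Icc 1 (i - 1), (1 + ‖y mm‖) ^ N ∧
          ‖X ε i t‖ ≤ C * ∏ mm ∈ Finset.Icc 1 (i - 1), (1 + ‖y mm‖) ^ N ∧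
          ‖X ε i t - x i t‖ ≤ ε * D * ∏ mm ∈ Finset.Icc 1 (i - 1), (1 + ‖y mm‖) ^ N := by
  have hK₁0 : (0:ℝ) ≤ K₁ := by linarith
  have hF₀0 : (0:ℝ) ≤ ‖f 0 0‖ + K₁ * ρmax := by
    have := norm_nonneg (f 0 0); nlinarith
  have hexp1 : (1:ℝ) ≤ Real.exp K₁ := by
    rw [← Real.exp_zero]; exact Real.exp_le_exp.2 (by linarith)
  obtain ⟨⟨Du, hDu⟩, hub⟩ := hu
  have huT : AEStronglyMeasurable u (volume.restrict (Icc 0 (T:ℝ))) :=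
    aesm_pw measurableSet_Icc Du hDu
  have hsubI : ∀ j : ℕ, 1 ≤ j → j ≤ T → Icc ((j:ℝ)-1) (j:ℝ) ⊆ Icc 0 (T:ℝ) := by
    intro j hj1 hjT
    have h1 : (1:ℝ) ≤ (j:ℝ) := by exact_mod_cast hj1
    have h2 : (j:ℝ) ≤ (T:ℝ) := by exact_mod_cast hjT
    exact Icc_subset_Icc (by linarith) h2
  have step : ∀ j : ℕ, 1 ≤ j → j ≤ T → ∀ (xx XX : ℝ → EucSp nx) (ε : ℝ), 0 ≤ ε →
      (ContinuousOn xx (Icc ((j:ℝ)-1) (j:ℝ)) ∧ ∀ t ∈ Icc ((j:ℝ)-1) (j:ℝ),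
         xx t = xx ((j:ℝ)-1) + ∫ s in ((j:ℝ)-1)..t, f (xx s) (u s)) →
      (ContinuousOn XX (Icc ((j:ℝ)-1) (j:ℝ)) ∧ ∀ t ∈ Icc ((j:ℝ)-1) (j:ℝ),
         XX t = XX ((j:ℝ)-1) + ∫ s in ((j:ℝ)-1)..t, f (XX s) (perturb u τ v ε s)) →
      ∀ t ∈ Icc ((j:ℝ)-1) (j:ℝ),
        ‖xx t‖ ≤ (‖xx ((j:ℝ)-1)‖ + (‖f 0 0‖ + K₁ * ρmax)) * Real.exp K₁ ∧
        ‖XX t‖ ≤ (‖XX ((j:ℝ)-1)‖ + (‖f 0 0‖ + K₁ * ρmax)) * Real.exp K₁ ∧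
        ‖XX t - xx t‖ ≤
          (‖XX ((j:ℝ)-1) - xx ((j:ℝ)-1)‖ + K₁ * (2*ρmax*ε)) * Real.exp K₁ := by
    intro j hj1 hjT xx XX ε hε hsx hsX
    have hj1R : (1:ℝ) ≤ (j:ℝ) := by exact_mod_cast hj1
    have hab : (j:ℝ)-1 ≤ (j:ℝ) := by linarith
    have hsub := hsubI j hj1 hjT
    have hum : AEStronglyMeasurable u (volume.restrict (Icc ((j:ℝ)-1) (j:ℝ))) :=
      huT.mono_measure (Measure.restrict_mono hsub le_rfl)
    have hum' : AEStronglyMeasurable (perturb u τ v ε)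
        (volume.restrict (Icc ((j:ℝ)-1) (j:ℝ))) := perturb_aesm hum τ v ε
    have hubdd : ∀ s ∈ Icc ((j:ℝ)-1) (j:ℝ), ‖u s‖ ≤ ρmax := fun s hs => hub s (hsub hs)
    have hubdd' : ∀ s ∈ Icc ((j:ℝ)-1) (j:ℝ), ‖perturb u τ v ε s‖ ≤ ρmax :=
      fun s hs => perturb_norm_le (hubdd s hs) hv
    have hba : (j:ℝ) - ((j:ℝ)-1) = 1 := by ring
    have h1 := sol_norm_bound hρ hK₁ hf hLip hab hsx hum hubdd
    have h2 := sol_norm_bound hρ hK₁ hf hLip hab hsX hum' hubdd'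
    have hud := perturb_sub_integrable τ v ε hab hum hubdd hv
    have hηb := perturb_integral_le hρ τ v hε hab hum hubdd hv
    have h3 := sol_diff_bound hρ hK₁ hf hLip hab hsx hsX hum hum' hubdd hubdd' hud
      (η := 2*ρmax*ε) (by nlinarith) hηb
    intro t ht
    have e1 := h1 t ht
    have e2 := h2 t ht
    have e3 := h3 t ht
    rw [hba] at e1 e2 e3
    simp only [mul_one] at e1 e2 e3
    exact ⟨e1, e2, e3⟩
  revert hiT
  induction i, hi1 using Nat.le_induction with
  | base =>
    intro hiT
    refine ⟨(‖x₀‖ + (‖f 0 0‖ + K₁ * ρmax) + 1) * Real.exp K₁,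
      (K₁ * (2*ρmax) + 1) * Real.exp K₁, 0, ?_, ?_, ?_⟩
    · have h1 : (1:ℝ) ≤ ‖x₀‖ + (‖f 0 0‖ + K₁ * ρmax) + 1 := by
        have := norm_nonneg x₀; linarith
      calc (1:ℝ) = 1 * 1 := by ring
        _ ≤ (‖x₀‖ + (‖f 0 0‖ + K₁ * ρmax) + 1) * Real.exp K₁ :=
          mul_le_mul h1 hexp1 zero_le_one (by linarith)
    · have h1 : (0:ℝ) < K₁ * (2*ρmax) + 1 := by nlinarith
      exact mul_pos h1 (Real.exp_pos K₁)
    intro y xx XX hx hX ε hε t ht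
    have hsol := hx.2.1 1 le_rfl hT
    have hsol' := (hX ε hε).2.1 1 le_rfl hT
    have hx0 : xx 1 0 = x₀ := hx.1
    have hX0 : XX ε 1 0 = x₀ := (hX ε hε).1
    have hstep := step 1 le_rfl hT (xx 1) (XX ε 1) ε hε.1 hsol hsol' t ht
    have ha : ((1:ℕ):ℝ) - 1 = 0 := by norm_num
    rw [ha, hx0, hX0] at hstep
    have hprod : ∏ mm ∈ Finset.Icc 1 (1 - 1), (1 + ‖y mm‖) ^ 0 = 1 := by simp
    rw [hprod]
    have hεpos := hε.1
    refine ⟨?_, ?_, ?_⟩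
    · have := hstep.1; have := norm_nonneg x₀; nlinarith [Real.exp_pos K₁]
    · have := hstep.2.1; have := norm_nonneg x₀; nlinarith [Real.exp_pos K₁]
    · have h := hstep.2.2
      have hz : x₀ - x₀ = 0 := sub_self x₀
      rw [hz, norm_zero] at h
      nlinarith [Real.exp_pos K₁]
  | succ i hi IH =>
    intro hiT
    obtain ⟨C, D, N, hC1, hD0, hbd⟩ := IH (Nat.le_of_succ_le hiT)
    have hKg1 : (1:ℝ) ≤ K₂ + K₃ + K₄ + K₅ + 1 := by linarith
    set Kg : ℝ := K₂ + K₃ + K₄ + K₅ + 1 with hKgdef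
    have h2C : (1:ℝ) ≤ 2*C := by linarith
    have h2CL : (1:ℝ) ≤ (2*C)^L₁ := one_le_pow₀ h2C
    refine ⟨(Kg * (2*C)^L₁ + (‖f 0 0‖ + K₁ * ρmax) + 1) * Real.exp K₁,
      (D * (Kg * (2*C)^L₁) + K₁*(2*ρmax) + 1) * Real.exp K₁,
      N*(L₁+1) + L₂, ?_, ?_, ?_⟩
    · have hKgL : (1:ℝ) ≤ Kg * (2*C)^L₁ := by nlinarith [hKg1, h2CL]
      have h1 : (1:ℝ) ≤ Kg * (2*C)^L₁ + (‖f 0 0‖ + K₁ * ρmax) + 1 := by linarith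
      calc (1:ℝ) = 1 * 1 := by ring
        _ ≤ (Kg * (2*C)^L₁ + (‖f 0 0‖ + K₁ * ρmax) + 1) * Real.exp K₁ :=
          mul_le_mul h1 hexp1 zero_le_one (by linarith)
    · have hKgL : (1:ℝ) ≤ Kg * (2*C)^L₁ := by nlinarith [hKg1, h2CL]
      have h1 : (0:ℝ) < D * (Kg * (2*C)^L₁) + K₁*(2*ρmax) + 1 := by nlinarith
      exact mul_pos h1 (Real.exp_pos K₁)
    intro y xx XX hx hX ε hε t ht
    simp only [Nat.add_sub_cancel]
    have hεpos := hε.1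
    set N' : ℕ := N*(L₁+1) + L₂ with hN'def
    set PP : ℝ := ∏ mm ∈ Finset.Icc 1 (i-1), (1 + ‖y mm‖)^N with hPPdef
    have hone : ∀ (k : ℕ) (j : ℕ), (1:ℝ) ≤ (1 + ‖y j‖)^k :=
      fun k j => one_le_pow₀ (by have := norm_nonneg (y j); linarith)
    have hPP1 : (1:ℝ) ≤ PP := by rw [hPPdef]; exact one_le_finset_prod_aux (fun j _ => hone N j)
    set PP' : ℝ := ∏ mm ∈ Finset.Icc 1 i, (1 + ‖y mm‖)^N' with hPP'def
    have hPP'1 : (1:ℝ) ≤ PP' := by rw [hPP'def]; exact one_le_finset_prod_aux (fun j _ => hone N' j)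
    set Yi : ℝ := 1 + ‖y i‖ with hYidef
    have hYi1 : (1:ℝ) ≤ Yi := by rw [hYidef]; have := norm_nonneg (y i); linarith
    set R : ℝ := C * PP with hRdef
    have hR1 : (1:ℝ) ≤ R := by
      rw [hRdef]
      calc (1:ℝ) = 1 * 1 := by ring
        _ ≤ C * PP := mul_le_mul hC1 hPP1 zero_le_one (by linarith)
    have hR0 : (0:ℝ) ≤ R := by linarith
    -- bound for g terms
    have hgest : ∀ z : EucSp nx, ‖z‖ ≤ R →
        K₂ + K₃ * ‖z‖ ^ L₁ + K₄ * ‖y i‖ ^ L₂ + K₅ * ‖z‖ ^ L₁ * ‖y i‖ ^ L₂ ≤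
          Kg * R^L₁ * Yi^L₂ := by
      intro z hz
      have hzL : ‖z‖^L₁ ≤ R^L₁ := pow_le_pow_left₀ (norm_nonneg z) hz L₁
      have hyL : ‖y i‖^L₂ ≤ Yi^L₂ :=
        pow_le_pow_left₀ (norm_nonneg (y i)) (by simp [hYidef]) L₂
      have hRL : (1:ℝ) ≤ R^L₁ := one_le_pow₀ hR1
      have hYL : (1:ℝ) ≤ Yi^L₂ := one_le_pow₀ hYi1
      have hz0 : (0:ℝ) ≤ ‖z‖^L₁ := pow_nonneg (norm_nonneg z) L₁
      have hy0 : (0:ℝ) ≤ ‖y i‖^L₂ := pow_nonneg (norm_nonneg (y i)) L₂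
      have hp1 : ‖z‖^L₁ * ‖y i‖^L₂ ≤ R^L₁ * Yi^L₂ :=
        mul_le_mul hzL hyL hy0 (by linarith)
      have hp2 : ‖z‖^L₁ * 1 ≤ R^L₁ * Yi^L₂ :=
        mul_le_mul hzL hYL zero_le_one (by linarith)
      have hp3 : (1:ℝ) * ‖y i‖^L₂ ≤ R^L₁ * Yi^L₂ :=
        mul_le_mul hRL hyL hy0 (by linarith)
      have hp4 : (1:ℝ) ≤ R^L₁ * Yi^L₂ := by
        calc (1:ℝ) = 1 * 1 := by ring
          _ ≤ R^L₁ * Yi^L₂ := mul_le_mul hRL hYL zero_le_one (by linarith)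
      rw [hKgdef]
      nlinarith
    have hgnorm : ∀ z : EucSp nx, ‖z‖ ≤ R → ‖g z (y i)‖ ≤ Kg * R^L₁ * Yi^L₂ :=
      fun z hz => le_trans (hgb z (y i)).1 (hgest z hz)
    have hglip : ∀ z₁ z₂ : EucSp nx, ‖z₁‖ ≤ R → ‖z₂‖ ≤ R →
        ‖g z₁ (y i) - g z₂ (y i)‖ ≤ Kg * R^L₁ * Yi^L₂ * ‖z₁ - z₂‖ := by
      intro z₁ z₂ h₁ h₂
      exact mean_value_ball (hgd (y i))
        (fun z hz => le_trans (hgb z (y i)).2 (hgest z hz)) h₁ h₂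
    -- IH at right endpoint
    have hiIcc : (i:ℝ) ∈ Icc ((i:ℝ)-1) (i:ℝ) := ⟨by linarith, le_rfl⟩
    obtain ⟨hxi, hXi, hdi⟩ := hbd y xx XX hx hX ε hε (i:ℝ) hiIcc
    -- jump
    have hjumpx : xx (i+1) (i:ℝ) = g (xx i (i:ℝ)) (y i) := hx.2.2 i hi hiT
    have hjumpX : XX ε (i+1) (i:ℝ) = g (XX ε i (i:ℝ)) (y i) := (hX ε hε).2.2 i hi hiT
    have hjxn : ‖xx (i+1) (i:ℝ)‖ ≤ Kg * R^L₁ * Yi^L₂ := by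
      rw [hjumpx]; exact hgnorm _ hxi
    have hjXn : ‖XX ε (i+1) (i:ℝ)‖ ≤ Kg * R^L₁ * Yi^L₂ := by
      rw [hjumpX]; exact hgnorm _ hXi
    have hjdn : ‖XX ε (i+1) (i:ℝ) - xx (i+1) (i:ℝ)‖ ≤
        Kg * R^L₁ * Yi^L₂ * (ε * D * PP) := by
      rw [hjumpx, hjumpX]
      have hKgRY : (0:ℝ) ≤ Kg * R^L₁ * Yi^L₂ :=
        mul_nonneg (mul_nonneg (by linarith) (pow_nonneg hR0 L₁))
          (pow_nonneg (by linarith) L₂)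
      exact le_trans (hglip _ _ hXi hxi) (mul_le_mul_of_nonneg_left hdi hKgRY)
    -- product comparisons
    have hins : Finset.Icc 1 i = insert i (Finset.Icc 1 (i-1)) := by
      ext a; simp only [Finset.mem_Icc, Finset.mem_insert]; omega
    have hnotmem : i ∉ Finset.Icc 1 (i-1) := by
      simp only [Finset.mem_Icc]; omega
    have hPP'eq : PP' = Yi^N' * ∏ mm ∈ Finset.Icc 1 (i-1), (1 + ‖y mm‖)^N' := by
      rw [hPP'def, hins, Finset.prod_insert hnotmem, hYidef]
    have hPPpow : ∀ k : ℕ, PP^k = ∏ mm ∈ Finset.Icc 1 (i-1), (1 + ‖y mm‖)^(N*k) := by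
      intro k
      rw [hPPdef, ← Finset.prod_pow]
      exact Finset.prod_congr rfl fun j _ => by rw [← pow_mul]
    have hprodle : ∀ k : ℕ, k ≤ N' →
        (∏ mm ∈ Finset.Icc 1 (i-1), (1 + ‖y mm‖)^k) ≤
          ∏ mm ∈ Finset.Icc 1 (i-1), (1 + ‖y mm‖)^N' := by
      intro k hk
      refine Finset.prod_le_prod (fun j _ => by positivity) (fun j _ => ?_)
      exact pow_le_pow_right₀ (by have := norm_nonneg (y j); linarith) hk
    have hPP : PP^(L₁+1) * Yi^L₂ ≤ PP' := by
      rw [hPP'eq, hPPpow (L₁+1)]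
      have h1 : (∏ mm ∈ Finset.Icc 1 (i-1), (1 + ‖y mm‖)^(N*(L₁+1))) ≤
          ∏ mm ∈ Finset.Icc 1 (i-1), (1 + ‖y mm‖)^N' :=
        hprodle _ (by rw [hN'def]; omega)
      have h2 : Yi^L₂ ≤ Yi^N' := pow_le_pow_right₀ hYi1 (by rw [hN'def]; omega)
      have h3 : (0:ℝ) ≤ Yi^L₂ := pow_nonneg (by linarith) L₂
      have h4 : (0:ℝ) ≤ ∏ mm ∈ Finset.Icc 1 (i-1), (1 + ‖y mm‖)^(N*(L₁+1)) := by
        refine Finset.prod_nonneg fun j _ => by positivity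
      calc (∏ mm ∈ Finset.Icc 1 (i-1), (1 + ‖y mm‖)^(N*(L₁+1))) * Yi^L₂
          ≤ (∏ mm ∈ Finset.Icc 1 (i-1), (1 + ‖y mm‖)^N') * Yi^N' := by
            refine mul_le_mul h1 h2 h3 ?_
            refine Finset.prod_nonneg fun j _ => by positivity
        _ = Yi^N' * ∏ mm ∈ Finset.Icc 1 (i-1), (1 + ‖y mm‖)^N' := by ring
    have hPP' : PP^L₁ * Yi^L₂ ≤ PP' := by
      have h1 : PP^L₁ ≤ PP^(L₁+1) := pow_le_pow_right₀ hPP1 (by omega)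
      have h2 : (0:ℝ) ≤ Yi^L₂ := pow_nonneg (by linarith) L₂
      exact le_trans (mul_le_mul_of_nonneg_right h1 h2) hPP
    have hRpow : R^L₁ = C^L₁ * PP^L₁ := mul_pow C PP L₁
    have hCle : C^L₁ ≤ (2*C)^L₁ := pow_le_pow_left₀ (by linarith) (by linarith) L₁
    have hPPL0 : (0:ℝ) ≤ PP^L₁ := pow_nonneg (by linarith) L₁
    have hYL0 : (0:ℝ) ≤ Yi^L₂ := pow_nonneg (by linarith) L₂
    have h2CL0 : (0:ℝ) ≤ (2*C)^L₁ := pow_nonneg (by linarith) L₁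
    have hKg0 : (0:ℝ) ≤ Kg := by linarith
    have hkey0 : Kg * R^L₁ * Yi^L₂ ≤ Kg * (2*C)^L₁ * PP' := by
      rw [hRpow]
      have h2 : C^L₁ * (PP^L₁ * Yi^L₂) ≤ (2*C)^L₁ * PP' :=
        mul_le_mul hCle hPP' (mul_nonneg hPPL0 hYL0) h2CL0
      have h5 := mul_le_mul_of_nonneg_left h2 hKg0
      calc Kg * (C^L₁ * PP^L₁) * Yi^L₂ = Kg * (C^L₁ * (PP^L₁ * Yi^L₂)) := by ring
        _ ≤ Kg * ((2*C)^L₁ * PP') := h5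
        _ = Kg * (2*C)^L₁ * PP' := by ring
    have hkey : Kg * R^L₁ * Yi^L₂ * PP ≤ Kg * (2*C)^L₁ * PP' := by
      rw [hRpow]
      have h1 : PP^L₁ * Yi^L₂ * PP ≤ PP' := by
        have he : PP^L₁ * Yi^L₂ * PP = PP^(L₁+1) * Yi^L₂ := by ring
        rw [he]; exact hPP
      have h2 : C^L₁ * (PP^L₁ * Yi^L₂ * PP) ≤ (2*C)^L₁ * PP' :=
        mul_le_mul hCle h1
          (mul_nonneg (mul_nonneg hPPL0 hYL0) (by linarith)) h2CL0
      have h5 := mul_le_mul_of_nonneg_left h2 hKg0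
      calc Kg * (C^L₁ * PP^L₁) * Yi^L₂ * PP
          = Kg * (C^L₁ * (PP^L₁ * Yi^L₂ * PP)) := by ring
        _ ≤ Kg * ((2*C)^L₁ * PP') := h5
        _ = Kg * (2*C)^L₁ * PP' := by ring
    -- ODE on mode i+1
    have hsol := hx.2.1 (i+1) (by omega) hiT
    have hsol' := (hX ε hε).2.1 (i+1) (by omega) hiT
    have ha : ((i+1:ℕ):ℝ) - 1 = (i:ℝ) := by push_cast; ring
    have hstep := step (i+1) (by omega) hiT (xx (i+1)) (XX ε (i+1)) ε hεpos hsol hsol' t ht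
    rw [ha] at hstep
    obtain ⟨e1, e2, e3⟩ := hstep
    have hKgR0 : (0:ℝ) ≤ Kg * (2*C)^L₁ := mul_nonneg hKg0 h2CL0
    have hexpos := Real.exp_pos K₁
    have hF₀PP : Kg * (2*C)^L₁ * PP' + (‖f 0 0‖ + K₁ * ρmax) ≤
        (Kg * (2*C)^L₁ + (‖f 0 0‖ + K₁ * ρmax) + 1) * PP' := by
      have h4 : (‖f 0 0‖ + K₁ * ρmax) + 1 ≤ ((‖f 0 0‖ + K₁ * ρmax) + 1) * PP' :=
        le_mul_of_one_le_right (by linarith) hPP'1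
      nlinarith
    refine ⟨?_, ?_, ?_⟩
    · have hb : ‖xx (i+1) (i:ℝ)‖ ≤ Kg * (2*C)^L₁ * PP' := le_trans hjxn hkey0
      calc ‖xx (i+1) t‖
          ≤ (‖xx (i+1) (i:ℝ)‖ + (‖f 0 0‖ + K₁ * ρmax)) * Real.exp K₁ := e1
        _ ≤ (Kg * (2*C)^L₁ * PP' + (‖f 0 0‖ + K₁ * ρmax)) * Real.exp K₁ :=
            mul_le_mul_of_nonneg_right (by linarith) hexpos.le
        _ ≤ ((Kg * (2*C)^L₁ + (‖f 0 0‖ + K₁ * ρmax) + 1) * PP') * Real.exp K₁ :=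
            mul_le_mul_of_nonneg_right hF₀PP hexpos.le
        _ = (Kg * (2*C)^L₁ + (‖f 0 0‖ + K₁ * ρmax) + 1) * Real.exp K₁ * PP' := by
            ring
    · have hb : ‖XX ε (i+1) (i:ℝ)‖ ≤ Kg * (2*C)^L₁ * PP' := le_trans hjXn hkey0
      calc ‖XX ε (i+1) t‖
          ≤ (‖XX ε (i+1) (i:ℝ)‖ + (‖f 0 0‖ + K₁ * ρmax)) * Real.exp K₁ := e2
        _ ≤ (Kg * (2*C)^L₁ * PP' + (‖f 0 0‖ + K₁ * ρmax)) * Real.exp K₁ :=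
            mul_le_mul_of_nonneg_right (by linarith) hexpos.le
        _ ≤ ((Kg * (2*C)^L₁ + (‖f 0 0‖ + K₁ * ρmax) + 1) * PP') * Real.exp K₁ :=
            mul_le_mul_of_nonneg_right hF₀PP hexpos.le
        _ = (Kg * (2*C)^L₁ + (‖f 0 0‖ + K₁ * ρmax) + 1) * Real.exp K₁ * PP' := by
            ring
    · have hb : ‖XX ε (i+1) (i:ℝ) - xx (i+1) (i:ℝ)‖ ≤
          ε * (D * (Kg * (2*C)^L₁)) * PP' := by
        refine le_trans hjdn ?_
        have h2 : (0:ℝ) ≤ ε * D := mul_nonneg hεpos (by linarith)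
        have h5 := mul_le_mul_of_nonneg_left hkey h2
        calc Kg * R^L₁ * Yi^L₂ * (ε * D * PP)
            = (ε * D) * (Kg * R^L₁ * Yi^L₂ * PP) := by ring
          _ ≤ (ε * D) * (Kg * (2*C)^L₁ * PP') := h5
          _ = ε * (D * (Kg * (2*C)^L₁)) * PP' := by ring
      have hq : (0:ℝ) ≤ K₁ * (2*ρmax) * ε :=
        mul_nonneg (mul_nonneg hK₁0 (by linarith)) hεpos
      have hq1 : K₁ * (2*ρmax) * ε ≤ K₁ * (2*ρmax) * ε * PP' :=
        le_mul_of_one_le_right hq hPP'1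
      have hq2 : ε ≤ ε * PP' := le_mul_of_one_le_right hεpos hPP'1
      have hsum : ε * (D * (Kg * (2*C)^L₁)) * PP' + K₁ * (2*ρmax*ε) ≤
          ε * (D * (Kg * (2*C)^L₁) + K₁*(2*ρmax) + 1) * PP' := by nlinarith
      calc ‖XX ε (i+1) t - xx (i+1) t‖
          ≤ (‖XX ε (i+1) (i:ℝ) - xx (i+1) (i:ℝ)‖ + K₁ * (2*ρmax*ε)) * Real.exp K₁ := e3
        _ ≤ (ε * (D * (Kg * (2*C)^L₁)) * PP' + K₁ * (2*ρmax*ε)) * Real.exp K₁ :=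
            mul_le_mul_of_nonneg_right (by linarith) hexpos.le
        _ ≤ (ε * (D * (Kg * (2*C)^L₁) + K₁*(2*ρmax) + 1) * PP') * Real.exp K₁ :=
            mul_le_mul_of_nonneg_right hsum hexpos.le
        _ = ε * ((D * (Kg * (2*C)^L₁) + K₁*(2*ρmax) + 1) * Real.exp K₁) * PP' := by
            ring


end Helpers2

set_option maxHeartbeats 1000000 in
/-- Proposition 20: cost differences along the perturbed and nominal hybrid
trajectories are bounded, uniformly in `ε ∈ [0, τ]`, by `ε` times constants (for mode 1 on
`(τ, 1]`) resp. `ε` times a polynomial in the observation norms (for modes `i ∈ {2,…,T}`),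
with constants independent of `ε`, of the perturbed control, and of the observations. -/
theorem cost_difference_mean_value_bound {nx ny m : ℕ} (T : ℕ) (hT : 1 ≤ T)
    (ρmax : ℝ) (hρ : 0 ≤ ρmax) (K₁ : ℝ) (hK₁ : 1 ≤ K₁)
    (K₂ K₃ K₄ K₅ : ℝ) (hK₂ : 0 ≤ K₂) (hK₃ : 0 ≤ K₃) (hK₄ : 0 ≤ K₄) (hK₅ : 0 ≤ K₅)
    (L₁ L₂ : ℕ) (hL₁ : 0 < L₁) (hL₂ : 0 < L₂)
    (K₆ K₇ : ℝ) (hK₆ : 0 ≤ K₆) (hK₇ : 0 ≤ K₇) (L₃ : ℕ) (hL₃ : 0 < L₃)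
    (f : EucSp nx → EucSp m → EucSp nx)
    (hf : ContDiff ℝ 1 fun p : EucSp nx × EucSp m => f p.1 p.2)
    (hLip : ∀ (x' x'' : EucSp nx) (u' u'' : EucSp m), ‖u'‖ ≤ ρmax → ‖u''‖ ≤ ρmax →
      ‖f x' u' - f x'' u''‖ ≤ K₁ * (‖x' - x''‖ + ‖u' - u''‖))
    (g : EucSp nx → EucSp ny → EucSp nx)
    (hgc : Continuous fun p : EucSp nx × EucSp ny => g p.1 p.2)
    (hgd : ∀ yy : EucSp ny, Differentiable ℝ fun z => g z yy)
    (hgb : ∀ (z : EucSp nx) (yy : EucSp ny),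
      ‖g z yy‖ ≤ K₂ + K₃ * ‖z‖ ^ L₁ + K₄ * ‖yy‖ ^ L₂ + K₅ * ‖z‖ ^ L₁ * ‖yy‖ ^ L₂ ∧
      ‖fderiv ℝ (fun w => g w yy) z‖ ≤
        K₂ + K₃ * ‖z‖ ^ L₁ + K₄ * ‖yy‖ ^ L₂ + K₅ * ‖z‖ ^ L₁ * ‖yy‖ ^ L₂)
    (c : EucSp nx → EucSp m → ℝ)
    (hcc : Continuous fun p : EucSp nx × EucSp m => c p.1 p.2)
    (hcx : ∀ uu : EucSp m, ContDiff ℝ 1 fun z => c z uu)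
    (hcb : ∀ (z : EucSp nx) (uu : EucSp m), ‖uu‖ ≤ ρmax →
      |c z uu| ≤ K₆ + K₇ * ‖z‖ ^ L₃ ∧
      ‖fderiv ℝ (fun w => c w uu) z‖ ≤ K₆ + K₇ * ‖z‖ ^ L₃)
    (u : ℝ → EucSp m) (hu : AdmissibleCtrl (T : ℝ) ρmax u)
    (τ : ℝ) (hτ : τ ∈ Set.Ioo (0 : ℝ) 1) (v : EucSp m) (hv : ‖v‖ ≤ ρmax)
    (huτ : ContinuousWithinAt u (Set.Iic τ) τ)
    (x₀ : EucSp nx) :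
    (∃ β₁ : ℝ, 0 < β₁ ∧
      ∀ (y : ℕ → EucSp ny) (x : ℕ → ℝ → EucSp nx) (X : ℝ → ℕ → ℝ → EucSp nx),
        HybridModes T f g u y x₀ x →
        (∀ ε ∈ Set.Icc (0 : ℝ) τ, HybridModes T f g (perturb u τ v ε) y x₀ (X ε)) →
        ∀ ε ∈ Set.Icc (0 : ℝ) τ, ∀ t ∈ Set.Ioc τ 1,
          |c (X ε 1 t) (perturb u τ v ε t) - c (x 1 t) (u t)| ≤ ε * β₁) ∧
    ∀ i : ℕ, 2 ≤ i → i ≤ T →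
      ∃ B : List ((ℕ → ℕ) × ℝ), (∀ p ∈ B, 0 < p.2) ∧
        ∀ (y : ℕ → EucSp ny) (x : ℕ → ℝ → EucSp nx) (X : ℝ → ℕ → ℝ → EucSp nx),
          HybridModes T f g u y x₀ x →
          (∀ ε ∈ Set.Icc (0 : ℝ) τ, HybridModes T f g (perturb u τ v ε) y x₀ (X ε)) →
          ∀ ε ∈ Set.Icc (0 : ℝ) τ, ∀ t ∈ Set.Icc ((i : ℝ) - 1) (i : ℝ),
            |c (X ε i t) (perturb u τ v ε t) - c (x i t) (u t)| ≤
              ε * (B.map fun p =>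
                p.2 * ∏ mm ∈ Finset.Icc 1 (i - 1), ‖y mm‖ ^ p.1 mm).sum := by
  have hfc : Continuous fun p : EucSp nx × EucSp m => f p.1 p.2 := hf.continuous
  have hTR : (1:ℝ) ≤ (T:ℝ) := by exact_mod_cast hT
  constructor
  · -- mode 1
    obtain ⟨C, D, N, hC1, hD0, hbd⟩ := mode_bounds T hT ρmax hρ K₁ hK₁ K₂ K₃ K₄ K₅
      hK₂ hK₃ hK₄ hK₅ L₁ L₂ f hfc hLip g hgd hgb u hu τ hτ v hv x₀ 1 le_rfl hT
    have hCL0 : (0:ℝ) ≤ C ^ L₃ := pow_nonneg (by linarith) L₃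
    have hK7C : (0:ℝ) ≤ K₇ * C ^ L₃ := mul_nonneg hK₇ hCL0
    refine ⟨(K₆ + K₇ * C ^ L₃ + 1) * D, mul_pos (by linarith) hD0, ?_⟩
    intro y x X hx hX ε hε t ht
    have hεpos := hε.1
    have ht1 : τ < t := ht.1
    have ht2 : t ≤ 1 := ht.2
    have ht' : t ∈ Set.Icc (((1:ℕ):ℝ) - 1) ((1:ℕ):ℝ) := by
      constructor
      · push_cast; linarith [hτ.1]
      · push_cast; linarith
    obtain ⟨h1, h2, h3⟩ := hbd y x X hx hX ε hε t ht'
    have hprod1 : ∏ mm ∈ Finset.Icc 1 (1 - 1), (1 + ‖y mm‖) ^ N = 1 := by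
      rw [show (1:ℕ) - 1 = 0 from rfl, Finset.Icc_eq_empty (by omega), Finset.prod_empty]
    rw [hprod1, mul_one] at h1 h2 h3
    have hpt : perturb u τ v ε t = u t := by
      rw [perturb, if_neg]; intro hcon; linarith [hcon.2]
    rw [hpt]
    have hut : ‖u t‖ ≤ ρmax := hu.2 t ⟨by linarith [hτ.1], by linarith⟩
    have hmv : ‖c (X ε 1 t) (u t) - c (x 1 t) (u t)‖ ≤
        (K₆ + K₇ * C ^ L₃) * ‖X ε 1 t - x 1 t‖ := by
      refine mean_value_ball (φ := fun z => c z (u t)) (R := C)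
        ((hcx (u t)).differentiable (by norm_num)) ?_ h2 h1
      intro z hz
      refine le_trans (hcb z (u t) hut).2 ?_
      have := pow_le_pow_left₀ (norm_nonneg z) hz L₃
      nlinarith
    rw [Real.norm_eq_abs] at hmv
    have hd0 : (0:ℝ) ≤ ‖X ε 1 t - x 1 t‖ := norm_nonneg _
    calc |c (X ε 1 t) (u t) - c (x 1 t) (u t)|
        ≤ (K₆ + K₇ * C ^ L₃) * ‖X ε 1 t - x 1 t‖ := hmv
      _ ≤ (K₆ + K₇ * C ^ L₃) * (ε * D) := by
          refine mul_le_mul_of_nonneg_left h3 (by linarith)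
      _ ≤ ε * ((K₆ + K₇ * C ^ L₃ + 1) * D) := by
          nlinarith [mul_nonneg hεpos (le_of_lt hD0)]
  · -- modes i ≥ 2
    intro i hi2 hiT
    obtain ⟨C, D, N, hC1, hD0, hbd⟩ := mode_bounds T hT ρmax hρ K₁ hK₁ K₂ K₃ K₄ K₅
      hK₂ hK₃ hK₄ hK₅ L₁ L₂ f hfc hLip g hgd hgb u hu τ hτ v hv x₀ i (by omega) hiT
    have hCL0 : (0:ℝ) ≤ C ^ L₃ := pow_nonneg (by linarith) L₃
    have hK7C : (0:ℝ) ≤ K₇ * C ^ L₃ := mul_nonneg hK₇ hCL0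
    have hCc : (0:ℝ) < (K₆ + K₇ * C ^ L₃ + 1) * D := mul_pos (by linarith) hD0
    obtain ⟨B, hBpos, hBle⟩ := poly_list (Finset.Icc 1 (i-1)) hCc (N*(L₃+1))
    refine ⟨B, hBpos, ?_⟩
    intro y x X hx hX ε hε t ht
    have hεpos := hε.1
    obtain ⟨h1, h2, h3⟩ := hbd y x X hx hX ε hε t ht
    set PP : ℝ := ∏ mm ∈ Finset.Icc 1 (i - 1), (1 + ‖y mm‖) ^ N with hPPdef
    have hPP1 : (1:ℝ) ≤ PP := by
      rw [hPPdef]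
      exact one_le_finset_prod_aux fun j _ =>
        one_le_pow₀ (by have := norm_nonneg (y j); linarith)
    have hiR : (2:ℝ) ≤ (i:ℝ) := by exact_mod_cast hi2
    have hiTR : (i:ℝ) ≤ (T:ℝ) := by exact_mod_cast hiT
    have hτt : τ < t := by have := ht.1; linarith [hτ.2]
    have hpt : perturb u τ v ε t = u t := by
      rw [perturb, if_neg]; intro hcon; linarith [hcon.2]
    rw [hpt]
    have hut : ‖u t‖ ≤ ρmax := hu.2 t ⟨by linarith [ht.1], by linarith [ht.2]⟩
    have hR0 : (0:ℝ) ≤ C * PP := by nlinarith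
    have hmv : ‖c (X ε i t) (u t) - c (x i t) (u t)‖ ≤
        (K₆ + K₇ * (C * PP) ^ L₃) * ‖X ε i t - x i t‖ := by
      refine mean_value_ball (φ := fun z => c z (u t)) (R := C * PP)
        ((hcx (u t)).differentiable (by norm_num)) ?_ h2 h1
      intro z hz
      refine le_trans (hcb z (u t) hut).2 ?_
      have := pow_le_pow_left₀ (norm_nonneg z) hz L₃
      nlinarith
    rw [Real.norm_eq_abs] at hmv
    -- algebra
    have hPPpow : PP ^ (L₃+1) = ∏ mm ∈ Finset.Icc 1 (i - 1), (1 + ‖y mm‖) ^ (N*(L₃+1)) := by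
      rw [hPPdef, ← Finset.prod_pow]
      exact Finset.prod_congr rfl fun j _ => by rw [← pow_mul]
    have hPPle : PP ≤ PP ^ (L₃+1) := by
      calc PP = PP ^ 1 := (pow_one PP).symm
        _ ≤ PP ^ (L₃+1) := pow_le_pow_right₀ hPP1 (by omega)
    have hPPL : PP ^ L₃ ≤ PP ^ (L₃+1) := pow_le_pow_right₀ hPP1 (by omega)
    have hPPL0 : (0:ℝ) ≤ PP ^ L₃ := pow_nonneg (by linarith) L₃
    have hkey : (K₆ + K₇ * (C * PP) ^ L₃) * (ε * D * PP) ≤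
        ε * ((K₆ + K₇ * C ^ L₃ + 1) * D * PP ^ (L₃+1)) := by
      have hCP : (C * PP) ^ L₃ = C ^ L₃ * PP ^ L₃ := mul_pow C PP L₃
      rw [hCP]
      have e1 : (K₆ + K₇ * (C ^ L₃ * PP ^ L₃)) * (ε * D * PP) =
          ε * D * (K₆ * PP + K₇ * C ^ L₃ * (PP ^ L₃ * PP)) := by ring
      have e2 : PP ^ L₃ * PP = PP ^ (L₃+1) := by rw [← pow_succ]
      rw [e1, e2]
      have hq1 : K₆ * PP ≤ K₆ * PP ^ (L₃+1) := by nlinarith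
      have hq2 : K₇ * C ^ L₃ * PP ^ (L₃+1) ≤ K₇ * C ^ L₃ * PP ^ (L₃+1) := le_refl _
      have hεD : (0:ℝ) ≤ ε * D := mul_nonneg hεpos (by linarith)
      have hin : K₆ * PP + K₇ * C ^ L₃ * PP ^ (L₃+1) ≤
          (K₆ + K₇ * C ^ L₃ + 1) * PP ^ (L₃+1) := by nlinarith
      calc ε * D * (K₆ * PP + K₇ * C ^ L₃ * PP ^ (L₃+1))
          ≤ ε * D * ((K₆ + K₇ * C ^ L₃ + 1) * PP ^ (L₃+1)) :=
            mul_le_mul_of_nonneg_left hin hεD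
        _ = ε * ((K₆ + K₇ * C ^ L₃ + 1) * D * PP ^ (L₃+1)) := by ring
    have hfinal : (K₆ + K₇ * (C * PP) ^ L₃) * ‖X ε i t - x i t‖ ≤
        ε * ((K₆ + K₇ * C ^ L₃ + 1) * D * PP ^ (L₃+1)) := by
      refine le_trans (mul_le_mul_of_nonneg_left h3 ?_) hkey
      have : (0:ℝ) ≤ (C * PP) ^ L₃ := pow_nonneg hR0 L₃
      nlinarith
    have hlist : (K₆ + K₇ * C ^ L₃ + 1) * D * PP ^ (L₃+1) ≤
        (B.map fun p => p.2 * ∏ mm ∈ Finset.Icc 1 (i - 1), ‖y mm‖ ^ p.1 mm).sum := by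
      rw [hPPpow]
      exact hBle (fun mm => ‖y mm‖) (fun j _ => norm_nonneg _)
    calc |c (X ε i t) (u t) - c (x i t) (u t)|
        ≤ (K₆ + K₇ * (C * PP) ^ L₃) * ‖X ε i t - x i t‖ := hmv
      _ ≤ ε * ((K₆ + K₇ * C ^ L₃ + 1) * D * PP ^ (L₃+1)) := hfinal
      _ ≤ ε * (B.map fun p =>
            p.2 * ∏ mm ∈ Finset.Icc 1 (i - 1), ‖y mm‖ ^ p.1 mm).sum :=
          mul_le_mul_of_nonneg_left hlist hεpos
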